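/- Let (f_α)_{α < ω₁} be a strictly increasing ω₁-sequence in ([0,1]^{<ω₁}_{↘0}, <_altlex), and suppose s ∈ σ*[0,1] is a strictly decreasing sequence of length β such that {γ < ω₁ : s ⊆ f_γ} contains an end segment of ω₁ for some ordinal β. If β is even, then the map γ ↦ f_γ(β) is order-preserving (non-strictly) on {γ : s ⊆ f_γ, l(f_γ) > β}; if β is odd it is order-reversing. -/
import Mathlib


open Ordinal Set

noncomputable section

/-- Parity of an ordinal: `a = γ + n` with `γ` limit, `n < ω`; even iff `n` is even. -/
def OrdEven (a : Ordinal) : Prop := a % 2 = 0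

/-- Upper semicontinuity. -/
def USC {X : Type} [TopologicalSpace X] (f : X → ℝ) : Prop :=
  ∀ r : ℝ, IsOpen (f ⁻¹' Set.Iio r)

/-- The least ordinal where two transfinite sequences differ. -/
def dOrd (f g : Ordinal → ℝ) : Ordinal := sInf {a | f a ≠ g a}

/-- The alternating lexicographical order on transfinite sequences of reals. -/
def AltLex (f g : Ordinal → ℝ) : Prop :=
  f ≠ g ∧ ((OrdEven (dOrd f g) ∧ f (dOrd f g) < g (dOrd f g)) ∨
    (¬ OrdEven (dOrd f g) ∧ g (dOrd f g) < f (dOrd f g)))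

/-- `f` encodes a strictly decreasing countable transfinite sequence in `[0,1]`
with last element `0` at index `ξ` (padded with `0` beyond `ξ`). -/
def IsDSeqLen (f : Ordinal → ℝ) (ξ : Ordinal) : Prop :=
  ξ < (Cardinal.aleph 1).ord ∧ (∀ a, f a ∈ Set.Icc (0:ℝ) 1) ∧
  (∀ a b, a < b → b ≤ ξ → f b < f a) ∧ (∀ a, ξ ≤ a → f a = 0)

/-- Membership in `[0,1]^{<ω₁}_{↘0}`. -/
def IsDSeq (f : Ordinal → ℝ) : Prop := ∃ ξ, IsDSeqLen f ξ

theorem stmt_11 (F : Ordinal → Ordinal → ℝ)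
    (hF : ∀ a, a < (Cardinal.aleph 1).ord → IsDSeq (F a))
    (hinc : ∀ a b, a < b → b < (Cardinal.aleph 1).ord → AltLex (F a) (F b))
    (s : Ordinal → ℝ) (β : Ordinal)
    (hsd : ∀ a b, a < b → b < β → s b < s a)
    (hs01 : ∀ a, a < β → s a ∈ Set.Icc (0:ℝ) 1)
    (hend : ∃ γ₀, γ₀ < (Cardinal.aleph 1).ord ∧
      ∀ γ, γ₀ ≤ γ → γ < (Cardinal.aleph 1).ord → ∀ a, a < β → F γ a = s a) :
    ∀ γ γ', γ < γ' → γ' < (Cardinal.aleph 1).ord →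
      (∀ a, a < β → F γ a = s a) → (∀ a, a < β → F γ' a = s a) →
      (∃ ξ, IsDSeqLen (F γ) ξ ∧ β ≤ ξ) → (∃ ξ, IsDSeqLen (F γ') ξ ∧ β ≤ ξ) →
      ((OrdEven β → F γ β ≤ F γ' β) ∧ (¬ OrdEven β → F γ' β ≤ F γ β)) := by
  intro γ γ' hlt hγ' hγs hγ's _ _
  by_cases heq : F γ β = F γ' β
  · exact ⟨fun _ => le_of_eq heq, fun _ => le_of_eq heq.symm⟩
  · have hd : dOrd (F γ) (F γ') = β := by
      apply le_antisymm
      · exact csInf_le' heq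
      · apply le_csInf ⟨β, heq⟩
        intro a ha
        by_contra h
        push_neg at h
        exact ha ((hγs a h).trans (hγ's a h).symm)
    have hal := hinc γ γ' hlt hγ'
    rcases hal.2 with ⟨he, hlt'⟩ | ⟨ho, hlt'⟩
    · rw [hd] at he hlt'
      exact ⟨fun _ => hlt'.le, fun h => absurd he h⟩
    · rw [hd] at ho hlt'
      exact ⟨fun h => absurd h ho, fun _ => hlt'.le⟩
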